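/- arXiv:1307.2210 — 6 statements merged into one kernel-verified Lean document; each statement's English description precedes it below -/
import Mathlib

section
/- Let A be a Banach algebra and d a derivation of A such that d maps every quasinilpotent element of A to a quasinilpotent element. Then d maps the Jacobson radical of A into the Jacobson radical of A. -/
/-- An element of a (possibly non-unital) complex Banach algebra is *quasinilpotent*
if its (quasi)spectrum is contained in `{0}`. -/
def IsQuasinilpotent {A : Type*} [NonUnitalRing A] [Module ℂ A] (a : A) : Prop :=
  quasispectrum ℂ a ⊆ {0}

/-- The Jacobson radical of `A`, characterized as
`rad(A) = {q | q • A consists of quasinilpotent elements}`. -/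
def jacobsonRadicalSet (A : Type*) [NonUnitalRing A] [Module ℂ A] : Set A :=
  {q : A | ∀ a : A, IsQuasinilpotent (q * a)}

/-- If a derivation `d` of a complex Banach algebra `A` maps every
quasinilpotent element to a quasinilpotent element, then `d` maps the Jacobson radical
of `A` into the Jacobson radical of `A`. -/
theorem derivation_maps_radical_into_radical
    {A : Type*} [NonUnitalNormedRing A] [NormedSpace ℂ A]
    [IsScalarTower ℂ A A] [SMulCommClass ℂ A A] [CompleteSpace A]
    (d : A →ₗ[ℂ] A) (hd : ∀ x y : A, d (x * y) = d x * y + x * d y)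
    (hQ : ∀ q : A, IsQuasinilpotent q → IsQuasinilpotent (d q)) :
    ∀ q ∈ jacobsonRadicalSet A, d q ∈ jacobsonRadicalSet A := by
  intro q hq a
  have hkey : d q * a = d (q * a) - q * d a := by
    rw [hd q a]; abel
  set u : A := d (q * a) with hu_def
  set v : A := q * d a with hv_def
  rw [IsQuasinilpotent, hkey]
  -- pass to the unitization
  rw [Unitization.quasispectrum_eq_spectrum_inr ℂ (u - v)]
  -- spectrum of u in the unitization is {0}
  have hu : spectrum ℂ ((u : Unitization ℂ A)) ⊆ {0} := by
    rw [← Unitization.quasispectrum_eq_spectrum_inr ℂ u]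
    exact hQ _ (hq a)
  -- v * w is always of the form q * c, hence quasinilpotent
  have hvw : ∀ w : Unitization ℂ A, spectrum ℂ ((v : Unitization ℂ A) * w) ⊆ {0} := by
    intro w
    have hc : (v : Unitization ℂ A) * w = ((q * (w.fst • d a + d a * w.snd) : A) : Unitization ℂ A) := by
      ext
      · simp [Unitization.fst_mul]
      · simp [Unitization.snd_mul, hv_def, mul_add, mul_smul_comm, mul_assoc]
    rw [hc, ← Unitization.quasispectrum_eq_spectrum_inr ℂ]
    exact hq _
  intro z hz
  by_contra hz0
  have hz0' : z ≠ 0 := fun h => hz0 (h ▸ rfl)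
  -- z - u is invertible
  have h1 : IsUnit (algebraMap ℂ (Unitization ℂ A) z - (u : Unitization ℂ A)) := by
    refine spectrum.notMem_iff.mp fun h => hz0' (hu h)
  set w : Unitization ℂ A := ↑h1.unit⁻¹ with hw_def
  have hw1 : (algebraMap ℂ (Unitization ℂ A) z - (u : Unitization ℂ A)) * w = 1 :=
    h1.mul_val_inv
  -- w * v is quasinilpotent, by the Jacobson σ(xy)\{0} = σ(yx)\{0} trick
  have hwv : spectrum ℂ (w * (v : Unitization ℂ A)) ⊆ {0} := by
    intro μ hμ
    by_contra hμ0
    have hμ0' : μ ≠ 0 := fun h => hμ0 (h ▸ rfl)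
    have : μ ∈ spectrum ℂ (w * (v : Unitization ℂ A)) \ {0} := ⟨hμ, hμ0'⟩
    rw [spectrum.nonzero_mul_comm] at this
    exact hμ0' (hvw w this.1)
  -- hence 1 + w * v is invertible
  have h2 : IsUnit (1 + w * (v : Unitization ℂ A)) := by
    have hm1 : (-1 : ℂ) ∉ spectrum ℂ (w * (v : Unitization ℂ A)) := by
      intro h
      exact (by norm_num : (-1 : ℂ) ≠ 0) (hwv h)
    have := spectrum.notMem_iff.mp hm1
    rw [map_neg, map_one] at this
    have := this.neg
    rwa [neg_sub, sub_neg_eq_add, add_comm] at this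
  -- factor z - (u - v) = (z - u) * (1 + w * v)
  have hfac : algebraMap ℂ (Unitization ℂ A) z - ((u - v : A) : Unitization ℂ A)
      = (algebraMap ℂ (Unitization ℂ A) z - (u : Unitization ℂ A)) * (1 + w * (v : Unitization ℂ A)) := by
    rw [Unitization.inr_sub, mul_add, mul_one, ← mul_assoc, hw1, one_mul]
    abel
  have : IsUnit (algebraMap ℂ (Unitization ℂ A) z - ((u - v : A) : Unitization ℂ A)) := by
    rw [hfac]; exact h1.mul h2
  exact spectrum.notMem_iff.mpr this hz
end

section
/- Every continuous derivation of a commutative Banach algebra A maps A into the Jacobson radical of A (Singer–Wermer theorem). -/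
open NormedSpace WeakDual

/-- **Singer–Wermer.** Every continuous derivation of a commutative complex
Banach algebra `A` maps `A` into the Jacobson radical of `A`. -/
theorem singer_wermer
    {A : Type*} [NormedCommRing A] [NormedAlgebra ℂ A] [CompleteSpace A]
    (d : A →ₗ[ℂ] A) (hd : ∀ x y : A, d (x * y) = d x * y + x * d y)
    (hdc : Continuous d) :
    ∀ x : A, d x ∈ Ideal.jacobson (⊥ : Ideal A) := by
  intro x
  set D : A →L[ℂ] A := ⟨d, hdc⟩ with hDdef
  set E : ℂ → (A →L[ℂ] A) := fun t => exp (t • D) with hEdef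
  haveI : IsScalarTower ℂ (A →L[ℂ] A) (A →L[ℂ] A) := ⟨fun c T S => by ext a; rfl⟩
  haveI : SMulCommClass ℂ (A →L[ℂ] A) (A →L[ℂ] A) :=
    ⟨fun c T S => by ext a; exact (T.map_smul c (S a)).symm⟩
  have hd1 : d 1 = 0 := by
    have h := hd 1 1
    simp only [mul_one, one_mul] at h
    exact (right_eq_add.mp h)
  -- derivative of `t ↦ E t a`
  have derivE : ∀ (a : A) (t : ℂ), HasDerivAt (fun s => E s a) (D (E t a)) t := by
    intro a t
    have h1 : HasDerivAt (fun s : ℂ => exp (s • D)) (D * E t) t :=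
      hasDerivAt_exp_smul_const' D t
    have h2 := h1.clm_apply (hasDerivAt_const t a)
    simpa using h2
  have commE : ∀ t : ℂ, Commute D (E t) := fun t =>
    ((Commute.refl D).smul_right t).exp_right
  have E0 : E 0 = 1 := by
    show exp ((0 : ℂ) • D) = 1
    rw [zero_smul ℂ D, exp_zero]
  have EE : ∀ t : ℂ, E t * E (-t) = 1 := by
    intro t
    rw [hEdef]
    rw [← exp_add_of_commute_of_mem_ball (𝕂 := ℂ) (((Commute.refl D).smul_left t).smul_right (-t))
      ((expSeries_radius_eq_top ℂ (A →L[ℂ] A)).symm ▸ edist_lt_top _ _)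
      ((expSeries_radius_eq_top ℂ (A →L[ℂ] A)).symm ▸ edist_lt_top _ _)]
    rw [neg_smul t D, add_neg_cancel (t • D), exp_zero]
  have Einv : ∀ (t : ℂ) (a : A), E t (E (-t) a) = a := by
    intro t a
    have h := congrArg (fun T : A →L[ℂ] A => T a) (EE t)
    simpa [ContinuousLinearMap.mul_apply] using h
  -- solutions of u' = D u are of the form E t (u 0)
  have const_of : ∀ (u : ℂ → A), (∀ t, HasDerivAt u (D (u t)) t) →
      ∀ t, E (-t) (u t) = u 0 := by
    intro u hu t
    have hg : ∀ s : ℂ, HasDerivAt (fun r => E (-r) (u r)) 0 s := by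
      intro s
      have hneg : HasDerivAt (fun r : ℂ => -r) (-1) s := (hasDerivAt_id s).neg
      have h := (hasDerivAt_exp_smul_const' (𝕂 := ℂ) D (-s)).scomp s hneg
      have h2' := h.clm_apply (hu s)
      have h2 : HasDerivAt (fun r => E (-r) (u r))
          ((((-1 : ℂ) • (D * E (-s))) (u s) : A) + (E (-s)) (D (u s))) s := h2'
      have hcomm : (D * E (-s)) (u s) = (E (-s)) (D (u s)) := by
        rw [(commE (-s)).eq]; rfl
      have h0 : ((((-1 : ℂ) • (D * E (-s))) (u s) : A)
          + (E (-s)) (D (u s))) = 0 := by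
        rw [ContinuousLinearMap.smul_apply, hcomm]
        simp
      rwa [h0] at h2
    have h := is_const_of_deriv_eq_zero (fun s => (hg s).differentiableAt)
      (fun s => (hg s).deriv) t 0
    simpa [E0] using h
  -- `E t` is multiplicative
  have mult : ∀ (t : ℂ) (a b : A), E t (a * b) = E t a * E t b := by
    intro t a b
    have hu : ∀ s : ℂ, HasDerivAt (fun r => E r a * E r b) (D (E s a * E s b)) s := by
      intro s
      have h := (derivE a s).mul (derivE b s)
      have : D (E s a) * E s b + E s a * D (E s b) = D (E s a * E s b) :=
        (hd (E s a) (E s b)).symm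
      rwa [this] at h
    have h := const_of _ hu t
    simp only [E0, ContinuousLinearMap.one_apply] at h
    have h2 := congrArg (E t) h
    rw [Einv] at h2
    exact h2.symm
  -- `E t` is unital
  have Eone : ∀ t : ℂ, E t 1 = 1 := by
    intro t
    have hu : ∀ s : ℂ, HasDerivAt (fun r => E r 1 - 1) (D (E s 1 - 1)) s := by
      intro s
      have h := (derivE 1 s).sub_const 1
      have heq : D (E s 1) = D (E s 1 - 1) := by
        rw [map_sub]
        show D (E s 1) = D (E s 1) - d 1
        rw [hd1, sub_zero]
      rwa [heq] at h
    have h := const_of _ hu t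
    simp only [E0, ContinuousLinearMap.one_apply, sub_self] at h
    have h2 := congrArg (E t) h
    rw [Einv, map_zero] at h2
    exact sub_eq_zero.mp h2
  -- character-space argument
  rw [Ideal.jacobson]
  refine Ideal.mem_sInf.mpr ?_
  rintro M ⟨-, hM⟩
  haveI := hM
  set φ : characterSpace ℂ A := M.toCharacterSpace with hφdef
  -- for each `t`, `a ↦ φ (E t a)` is an algebra homomorphism
  have hψ : ∀ t : ℂ, ∃ ψ : A →ₐ[ℂ] ℂ, ∀ a : A, ψ a = φ (E t a) := by
    intro t
    refine ⟨{ toFun := fun a => φ (E t a)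
              map_one' := ?_
              map_mul' := ?_
              map_zero' := ?_
              map_add' := ?_
              commutes' := ?_ }, fun a => rfl⟩
    · show φ (E t 1) = 1
      rw [Eone]; exact map_one φ
    · intro a b
      show φ (E t (a * b)) = φ (E t a) * φ (E t b)
      rw [mult]; exact map_mul φ _ _
    · show φ (E t 0) = 0
      simp
    · intro a b
      show φ (E t (a + b)) = φ (E t a) + φ (E t b)
      rw [map_add, map_add]
    · intro c
      show φ (E t ((algebraMap ℂ A) c)) = algebraMap ℂ ℂ c
      have h : E t ((algebraMap ℂ A) c) = algebraMap ℂ A c := by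
        rw [Algebra.algebraMap_eq_smul_one, map_smul, Eone]
      rw [h]
      exact AlgHomClass.commutes φ c
  -- the entire function `f t = φ (E t x)` is bounded, hence constant
  set φL : A →L[ℂ] ℂ := WeakDual.CharacterSpace.toCLM φ with hφL
  set f : ℂ → ℂ := fun t => φL (E t x) with hfdef
  have hfderiv : ∀ t : ℂ, HasDerivAt f (φL (D (E t x))) t := fun t =>
    φL.hasFDerivAt.comp_hasDerivAt t (derivE x t)
  have hbd : Bornology.IsBounded (Set.range f) := by
    refine isBounded_iff_forall_norm_le.mpr ⟨‖x‖ * ‖(1 : A)‖, ?_⟩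
    rintro - ⟨t, rfl⟩
    obtain ⟨ψ, hψa⟩ := hψ t
    have : f t = ψ x := (hψa x).symm
    rw [this]
    exact spectrum.norm_le_norm_mul_of_mem (AlgHom.apply_mem_spectrum ψ x)
  have hconst : ∀ t : ℂ, f t = f 0 := fun t =>
    Differentiable.apply_eq_apply_of_bounded
      (fun s => (hfderiv s).differentiableAt) hbd t 0
  have hf0 : HasDerivAt f 0 0 := by
    have : f = fun _ => f 0 := funext hconst
    rw [this]
    exact hasDerivAt_const 0 (f 0)
  have hkey : φL (D (E 0 x)) = 0 := (hfderiv 0).unique hf0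
  rw [E0, ContinuousLinearMap.one_apply] at hkey
  -- `φ (d x) = 0`, so `d x ∈ M`
  have hφdx : φ (d x) = 0 := hkey
  by_contra hdx
  obtain ⟨y, i, hi, h1⟩ := hM.exists_inv hdx
  have := congrArg φ h1
  rw [map_add, map_mul, hφdx, mul_zero, zero_add, map_one] at this
  rw [hφdef, M.toCharacterSpace_apply_eq_zero_of_mem hi] at this
  exact zero_ne_one this
end

section
/- Let A be a complex Banach algebra and π a continuous irreducible representation of A on a Banach space X of dimension at least 2. If A has the property that every continuous bilinear map φ : A × A → Y into a Banach space Y vanishing on pairs (a,b) with ab = 0 satisfies φ(ab,c) = φ(a,bc) for all a,b,c (property 𝔹), then there exist a, b ∈ A with ab = 0, π(a) ≠ 0, and π(b) ≠ 0. -/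
universe u

/-- Let `A` be a complex Banach algebra with property `𝔹` (every continuous
bilinear map `φ : A × A → Y` into a Banach space `Y` vanishing on pairs with zero product
satisfies `φ(ab,c) = φ(a,bc)`), and let `π` be a continuous irreducible representation of `A`
on a Banach space `X` with `dim X ≥ 2`.  Then there exist `a, b ∈ A` with `ab = 0`,
`π(a) ≠ 0` and `π(b) ≠ 0`. -/
theorem propertyB_gives_orthogonal_pair
    {A : Type u} [NonUnitalNormedRing A] [NormedSpace ℂ A]
    [IsScalarTower ℂ A A] [SMulCommClass ℂ A A] [CompleteSpace A]
    {X : Type u} [NormedAddCommGroup X] [NormedSpace ℂ X] [CompleteSpace X]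
    (hB : ∀ (Y : Type u) [NormedAddCommGroup Y] [NormedSpace ℂ Y] [CompleteSpace Y]
      (φ : A →L[ℂ] A →L[ℂ] Y),
      (∀ a b : A, a * b = 0 → φ a b = 0) → ∀ a b c : A, φ (a * b) c = φ a (b * c))
    (π : A →ₙₐ[ℂ] (X →L[ℂ] X)) (hπc : Continuous π)
    (hirr : ∀ ξ : X, ξ ≠ 0 → ∀ η : X, ∃ a : A, π a ξ = η)
    (hdim : 2 ≤ Module.rank ℂ X) :
    ∃ a b : A, a * b = 0 ∧ π a ≠ 0 ∧ π b ≠ 0 := by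
  by_contra hcon
  push_neg at hcon
  have h0 : ∀ a b : A, a * b = 0 → π a = 0 ∨ π b = 0 := by
    intro a b hab
    by_contra h'
    push_neg at h'
    exact h'.2 (hcon a b hab h'.1)
  -- nonzero vector and independent pair
  have hnt : Nontrivial X := by
    rw [← rank_pos_iff_nontrivial (R := ℂ)]
    exact lt_of_lt_of_le (by norm_num) hdim
  obtain ⟨ξ, hξ⟩ := exists_ne (0 : X)
  obtain ⟨η, hind⟩ := exists_linearIndependent_pair_of_one_lt_rank
    (lt_of_lt_of_le (by norm_num) hdim) hξ
  -- π as a continuous linear map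
  let π' : A →L[ℂ] (X →L[ℂ] X) :=
    { toFun := π, map_add' := map_add π, map_smul' := fun c x => map_smul π c x, cont := hπc }
  have hπ' : ∀ a : A, π' a = π a := fun a => rfl
  -- the key commutation relation
  have key : ∀ (b : A) (f : X →L[ℂ] X) (x : X), π b (f x) = f (π b x) := by
    intro b f x
    -- build the bilinear map φf a c = π a ∘ f ∘ π c
    let K : A →L[ℂ] (X →L[ℂ] X) →L[ℂ] (X →L[ℂ] X) :=
      (ContinuousLinearMap.compL ℂ X X X).comp π'
    let inner : A →L[ℂ] (X →L[ℂ] X) :=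
      (ContinuousLinearMap.compL ℂ X X X f).comp π'
    let φf : A →L[ℂ] A →L[ℂ] (X →L[ℂ] X) :=
      ((ContinuousLinearMap.compL ℂ A (X →L[ℂ] X) (X →L[ℂ] X)).flip inner).comp K
    have hφf : ∀ a c : A, φf a c = (π a).comp (f.comp (π c)) := fun a c => rfl
    have hvan : ∀ a c : A, a * c = 0 → φf a c = 0 := by
      intro a c hac
      rcases h0 a c hac with h | h <;> rw [hφf, h] <;> simp
    have hkey := hB (X →L[ℂ] X) φf hvan
    -- now the pointwise argument
    by_contra hy
    set y := π b (f x) - f (π b x) with hy'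
    have hyne : y ≠ 0 := sub_ne_zero_of_ne hy
    obtain ⟨c, hc⟩ := hirr ξ hξ x
    obtain ⟨a, ha⟩ := hirr y hyne y
    have := hkey a b c
    rw [hφf, hφf] at this
    have h2 := congrArg (fun T : X →L[ℂ] X => T ξ) this
    simp only [ContinuousLinearMap.comp_apply, map_mul, ContinuousLinearMap.mul_apply, hc] at h2
    -- h2 : π a (π b (f x)) = π a (f (π b x))
    have h3 : π a y = 0 := by
      rw [hy', map_sub, h2, sub_self]
    rw [ha] at h3
    exact hyne h3
  -- now derive contradiction with linear independence
  obtain ⟨b, hb⟩ := hirr ξ hξ η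
  obtain ⟨g, -, hg⟩ := exists_dual_vector ℂ ξ (norm_ne_zero_iff.mpr hξ)
  have hcomm := key b (g.smulRight ξ) ξ
  simp only [ContinuousLinearMap.smulRight_apply, hg, map_smul, hb] at hcomm
  have hp := (LinearIndependent.pair_iff.mp hind (g η) (-(‖ξ‖ : ℂ))
    (by rw [neg_smul, ← hcomm]; simp)).2
  rw [neg_eq_zero, Complex.ofReal_eq_zero, norm_eq_zero] at hp
  exact hξ hp
end

section
/- Let A be a non-unital complex Banach algebra with property β and A₁ = ℂ1 ⊕ A its unitization. Then A₁ has property β. -/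
set_option linter.unusedSectionVars false

universe u

/-- A continuous irreducible representation of `A` on a complex Banach space. -/
structure BanachRep (A : Type*) [NonUnitalNormedRing A] [NormedSpace ℂ A]
    [IsScalarTower ℂ A A] [SMulCommClass ℂ A A] where
  X : Type u
  [ng : NormedAddCommGroup X]
  [ns : NormedSpace ℂ X]
  [cs : CompleteSpace X]
  π : A →ₙₐ[ℂ] (X →L[ℂ] X)
  continuous : Continuous π
  irreducible : ∀ ξ : X, ξ ≠ 0 → ∀ η : X, ∃ a : A, π a ξ = η

attribute [instance] BanachRep.ng BanachRep.ns BanachRep.cs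

/-- Property `β` for `A`. -/
def HasPropertyBeta (A : Type*) [NonUnitalNormedRing A] [NormedSpace ℂ A]
    [IsScalarTower ℂ A A] [SMulCommClass ℂ A A] : Prop :=
  ∃ (ι : Type u) (r : ι → BanachRep.{u} A),
    {a : A | ∀ i, (r i).π a = 0} = jacobsonRadicalSet A ∧
    ∀ i, 2 ≤ Module.rank ℂ (r i).X → ∃ q : A, q * q = 0 ∧ (r i).π q ≠ 0

theorem myIsUnit_one_sub_swap {R : Type*} [Ring R] {x y : R}
    (h : IsUnit (1 - x * y)) : IsUnit (1 - y * x) := by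
  obtain ⟨v, hv⟩ := h
  have h1 : (1 - x * y) * ↑v⁻¹ = 1 := by rw [← hv]; exact v.mul_inv
  have h2 : (↑v⁻¹ : R) * (1 - x * y) = 1 := by rw [← hv]; exact v.inv_mul
  refine ⟨⟨1 - y * x, 1 + y * ↑v⁻¹ * x, ?_, ?_⟩, rfl⟩
  · calc (1 - y * x) * (1 + y * ↑v⁻¹ * x)
        = 1 + y * ((1 - x * y) * ↑v⁻¹ - 1) * x := by noncomm_ring
      _ = 1 := by rw [h1]; noncomm_ring
  · calc (1 + y * ↑v⁻¹ * x) * (1 - y * x)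
        = 1 + y * (↑v⁻¹ * (1 - x * y) - 1) * x := by noncomm_ring
      _ = 1 := by rw [h2]; noncomm_ring

section Main

variable {A : Type u} [NonUnitalNormedRing A] [NormedSpace ℂ A]
    [IsScalarTower ℂ A A] [SMulCommClass ℂ A A] [CompleteSpace A]
    [RegularNormedAlgebra ℂ A]

local notation "A₁" => Unitization ℂ A

lemma myQuasinil_iff_spectrum (x : A₁) : IsQuasinilpotent x ↔ spectrum ℂ x ⊆ {0} := by
  unfold IsQuasinilpotent
  rw [quasispectrum_eq_spectrum_union_zero]
  constructor
  · exact fun h => (Set.union_subset_iff.mp h).1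
  · intro h; exact Set.union_subset h (by simp)

lemma myQuasinil_inr_iff (a : A) :
    IsQuasinilpotent a ↔ spectrum ℂ (a : A₁) ⊆ {0} := by
  unfold IsQuasinilpotent
  rw [Unitization.quasispectrum_eq_spectrum_inr' ℂ ℂ]

lemma my_not_isUnit_inr (a : A) : ¬ IsUnit (a : A₁) := by
  intro h
  have := h.map (Unitization.fstHom ℂ A)
  rw [Unitization.fstHom_apply, Unitization.fst_inr] at this
  exact not_isUnit_zero this

lemma my_q_quasinil {q : A} (hq : q ∈ jacobsonRadicalSet A) :
    spectrum ℂ (q : A₁) ⊆ {0} := by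
  intro lam hl
  rw [Set.mem_singleton_iff]
  by_contra hne
  have hqq : spectrum ℂ ((q * q : A) : A₁) ⊆ {0} := (myQuasinil_inr_iff _).mp (hq q)
  have hsq : lam * lam ∉ spectrum ℂ ((q * q : A) : A₁) := by
    intro h; exact hne (by simpa [mul_self_eq_zero] using hqq h)
  rw [spectrum.notMem_iff] at hsq
  rw [spectrum.mem_iff] at hl
  apply hl
  set z : A₁ := (q : A₁)
  have key : algebraMap ℂ A₁ (lam * lam) - (q * q : A) =
      (algebraMap ℂ A₁ lam - z) * (algebraMap ℂ A₁ lam + z) := by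
    simp only [z, map_mul, Unitization.inr_mul]
    rw [sub_mul, mul_add, mul_add]
    rw [← Algebra.commutes lam (z : A₁)]
    abel
  rw [key] at hsq
  obtain ⟨v, hv⟩ := hsq
  set a := algebraMap ℂ A₁ lam with ha
  have hc : Commute a z := Algebra.commutes lam z
  have hcomm : (a + z) * (a - z) = (a - z) * (a + z) :=
    (((Commute.refl a).sub_right hc).add_left ((hc.symm).sub_right (Commute.refl z)))
  have hcv : Commute (a + z) (v : A₁) := by
    show (a + z) * ↑v = ↑v * (a + z)
    rw [hv, ← hcomm, mul_assoc, ← hcomm, ← mul_assoc]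
  refine ⟨⟨a - z, (a + z) * ↑v⁻¹, ?_, ?_⟩, rfl⟩
  · rw [← mul_assoc, ← hv, v.mul_inv]
  · calc (a + z) * ↑v⁻¹ * (a - z) = ↑v⁻¹ * ((a + z) * (a - z)) := by
          rw [hcv.units_inv_right.eq, mul_assoc]
      _ = 1 := by rw [hcomm, ← hv, v.inv_mul]

lemma my_key_unit {q : A} (hq : q ∈ jacobsonRadicalSet A) (c : A₁) :
    IsUnit (1 - (q : A₁) * c) := by
  -- decompose c
  have hc : c = algebraMap ℂ A₁ c.fst + (c.snd : A₁) := by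
    rw [Unitization.algebraMap_eq_inl]; exact (Unitization.inl_fst_add_inr_snd_eq c).symm
  set β := c.fst
  set b := c.snd
  -- the unit 1 - algebraMap β * q
  have u0 : IsUnit (1 - algebraMap ℂ A₁ β * (q : A₁)) := by
    rcases eq_or_ne β 0 with h | h
    · simp [h]
    · have hβi : (β : ℂ)⁻¹ ∉ spectrum ℂ ((q : A₁)) := by
        intro hm
        exact inv_ne_zero h (Set.mem_singleton_iff.mp (my_q_quasinil hq hm))
      rw [spectrum.notMem_iff] at hβi
      have : 1 - algebraMap ℂ A₁ β * (q : A₁) =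
          algebraMap ℂ A₁ β * (algebraMap ℂ A₁ β⁻¹ - (q : A₁)) := by
        rw [mul_sub, ← map_mul, mul_inv_cancel₀ h, map_one]
      rw [this]
      exact ((isUnit_iff_ne_zero.mpr h).map (algebraMap ℂ A₁)).mul hβi
  obtain ⟨v, hv⟩ := u0
  -- rewrite 1 - q*c = v - inr (q*b)
  have hqc : 1 - (q : A₁) * c = ↑v - ((q * b : A) : A₁) := by
    rw [hv, hc, mul_add, ← Algebra.commutes β ((q : A₁)), Unitization.inr_mul]
    abel
  rw [hqc]
  have hvu : (↑v - ((q * b : A) : A₁)) = ↑v * (1 - ↑v⁻¹ * ((q * b : A) : A₁)) := by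
    rw [mul_sub, mul_one, ← mul_assoc, v.mul_inv, one_mul]
  rw [hvu]
  refine (v.isUnit).mul (myIsUnit_one_sub_swap ?_)
  set w : A₁ := (b : A₁) * ↑v⁻¹ with hw
  have hwf : w.fst = 0 := by
    simp [hw, Unitization.fst_mul]
  have hww : w = (w.snd : A₁) := by
    conv_lhs => rw [← Unitization.inl_fst_add_inr_snd_eq w]
    rw [hwf, Unitization.inl_zero, zero_add]
  have hrw : ((q * b : A) : A₁) * ↑v⁻¹ = ((q * w.snd : A) : A₁) := by
    rw [Unitization.inr_mul, mul_assoc, ← hw]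
    conv_lhs => rw [hww]
    rw [← Unitization.inr_mul]
  rw [hrw]
  have h1 : (1 : ℂ) ∉ spectrum ℂ ((q * w.snd : A) : A₁) := fun hm =>
    one_ne_zero (Set.mem_singleton_iff.mp ((myQuasinil_inr_iff _).mp (hq w.snd) hm))
  rw [spectrum.notMem_iff, map_one] at h1
  exact h1

lemma my_radical_unitization :
    jacobsonRadicalSet (Unitization ℂ A) =
      {x : A₁ | x.fst = 0 ∧ x.snd ∈ jacobsonRadicalSet A} := by
  ext x
  constructor
  · intro hx
    have hx1 : spectrum ℂ x ⊆ {0} := by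
      have := (myQuasinil_iff_spectrum (x * 1)).mp (hx 1)
      rwa [mul_one] at this
    have hfst : x.fst = 0 := by
      have hmem : x.fst ∈ spectrum ℂ x := by
        rw [spectrum.mem_iff]
        intro h
        have heq : algebraMap ℂ A₁ x.fst - x = -(x.snd : A₁) := by
          have hX := Unitization.inl_fst_add_inr_snd_eq x
          rw [Unitization.algebraMap_eq_inl]
          nth_rewrite 2 [← hX]
          abel
        rw [heq, IsUnit.neg_iff] at h
        exact my_not_isUnit_inr x.snd h
      exact hx1 hmem
    refine ⟨hfst, fun b => ?_⟩
    have hxe : x = (x.snd : A₁) := by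
      conv_lhs => rw [← Unitization.inl_fst_add_inr_snd_eq x]
      rw [hfst, Unitization.inl_zero, zero_add]
    rw [myQuasinil_inr_iff]
    have := (myQuasinil_iff_spectrum (x * (b : A₁))).mp (hx (b : A₁))
    rwa [hxe, ← Unitization.inr_mul] at this
  · rintro ⟨hfst, hsnd⟩ y
    have hxe : x = (x.snd : A₁) := by
      conv_lhs => rw [← Unitization.inl_fst_add_inr_snd_eq x]
      rw [hfst, Unitization.inl_zero, zero_add]
    rw [myQuasinil_iff_spectrum]
    intro lam hlam
    rw [Set.mem_singleton_iff]
    by_contra hne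
    rw [spectrum.mem_iff] at hlam
    apply hlam
    have key : algebraMap ℂ A₁ lam - x * y =
        algebraMap ℂ A₁ lam * (1 - (x.snd : A₁) * (lam⁻¹ • y)) := by
      rw [mul_sub, mul_one, ← hxe]
      congr 1
      rw [← Algebra.smul_def, ← mul_smul_comm, smul_smul, mul_inv_cancel₀ hne, one_smul]
    rw [key]
    exact ((isUnit_iff_ne_zero.mpr hne).map (algebraMap ℂ A₁)).mul (my_key_unit hsnd _)


lemma my_continuous_fst : Continuous (fun x : Unitization ℂ A => x.fst) :=
  continuous_fst.comp (Unitization.uniformEquivProd (𝕜 := ℂ) (A := A)).continuous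

lemma my_continuous_snd : Continuous (fun x : Unitization ℂ A => x.snd) :=
  continuous_snd.comp (Unitization.uniformEquivProd (𝕜 := ℂ) (A := A)).continuous

/-- Extension of a representation of `A` to the unitization. -/
noncomputable def myExtRep (ρ : BanachRep.{u} A) : BanachRep.{u} (Unitization ℂ A) where
  X := ρ.X
  π := ρ.π.toAlgHom.toNonUnitalAlgHom
  continuous := by
    show Continuous fun x : Unitization ℂ A =>
      algebraMap ℂ (ρ.X →L[ℂ] ρ.X) x.fst + ρ.π x.snd
    have h1 : Continuous fun c : ℂ => algebraMap ℂ (ρ.X →L[ℂ] ρ.X) c := by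
      simp only [Algebra.algebraMap_eq_smul_one]
      exact continuous_id.smul continuous_const
    exact (h1.comp my_continuous_fst).add (ρ.continuous.comp my_continuous_snd)
  irreducible := by
    intro ξ hξ η
    obtain ⟨a, ha⟩ := ρ.irreducible ξ hξ η
    refine ⟨(a : Unitization ℂ A), ?_⟩
    show (algebraMap ℂ (ρ.X →L[ℂ] ρ.X) ((a : Unitization ℂ A).fst)
      + ρ.π ((a : Unitization ℂ A).snd)) ξ = η
    rw [Unitization.fst_inr, Unitization.snd_inr, map_zero, zero_add]
    exact ha

@[simp] lemma myExtRep_π_apply (ρ : BanachRep.{u} A) (x : Unitization ℂ A) :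
    (myExtRep ρ).π x = algebraMap ℂ (ρ.X →L[ℂ] ρ.X) x.fst + ρ.π x.snd := rfl

/-- The one-dimensional character representation of the unitization. -/
noncomputable def myCharRep : BanachRep.{u} (Unitization ℂ A) where
  X := ULift.{u} ℂ
  π := ((Algebra.ofId ℂ (ULift.{u} ℂ →L[ℂ] ULift.{u} ℂ)).comp
    (Unitization.fstHom ℂ A)).toNonUnitalAlgHom
  continuous := by
    show Continuous fun x : Unitization ℂ A =>
      algebraMap ℂ (ULift.{u} ℂ →L[ℂ] ULift.{u} ℂ) x.fst
    have h1 : Continuous fun c : ℂ => algebraMap ℂ (ULift.{u} ℂ →L[ℂ] ULift.{u} ℂ) c := by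
      simp only [Algebra.algebraMap_eq_smul_one]
      exact continuous_id.smul continuous_const
    exact h1.comp my_continuous_fst
  irreducible := by
    intro ξ hξ η
    have hd : ξ.down ≠ 0 := fun h => hξ (by ext; exact h)
    refine ⟨(Unitization.inl (η.down * ξ.down⁻¹) : Unitization ℂ A), ?_⟩
    show algebraMap ℂ (ULift.{u} ℂ →L[ℂ] ULift.{u} ℂ)
      ((Unitization.inl (η.down * ξ.down⁻¹) : Unitization ℂ A).fst) ξ = η
    rw [Unitization.fst_inl]
    ext
    show η.down * ξ.down⁻¹ * ξ.down = η.down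
    rw [mul_assoc, inv_mul_cancel₀ hd, mul_one]

@[simp] lemma myCharRep_π_apply (x : Unitization ℂ A) :
    (myCharRep (A := A)).π x = algebraMap ℂ (ULift.{u} ℂ →L[ℂ] ULift.{u} ℂ) x.fst := rfl

end Main

/-- Let `A` be a non-unital complex Banach algebra with property `β` and
`A₁ = ℂ1 ⊕ A` its unitization.  Then `A₁` has property `β`. -/
theorem unitization_hasPropertyBeta
    {A : Type u} [NonUnitalNormedRing A] [NormedSpace ℂ A]
    [IsScalarTower ℂ A A] [SMulCommClass ℂ A A] [CompleteSpace A]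
    [RegularNormedAlgebra ℂ A]
    (hA : ¬ ∃ e : A, ∀ a : A, e * a = a ∧ a * e = a)
    (hβ : HasPropertyBeta.{u} A) :
    HasPropertyBeta.{u} (Unitization ℂ A) := by
  obtain ⟨ι, r, hker, hsq⟩ := hβ
  refine ⟨Option ι, fun o => o.elim myCharRep (fun i => myExtRep (r i)), ?_, ?_⟩
  · rw [my_radical_unitization]
    ext x
    simp only [Set.mem_setOf_eq]
    constructor
    · intro h
      have h0 : x.fst = 0 := by
        have hn : (myCharRep (A := A)).π x = 0 := h none
        rw [myCharRep_π_apply] at hn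
        have h3 := congrArg (fun f : ULift.{u} ℂ →L[ℂ] ULift.{u} ℂ =>
          (f (ULift.up 1)).down) hn
        simpa [Algebra.algebraMap_eq_smul_one] using
          h3.trans (rfl : ((0 : ULift.{u} ℂ →L[ℂ] ULift.{u} ℂ) (ULift.up 1)).down = 0)
      refine ⟨h0, ?_⟩
      have hmem : x.snd ∈ {a : A | ∀ i, (r i).π a = 0} := by
        intro i
        have hi : (myExtRep (r i)).π x = 0 := h (some i)
        rw [myExtRep_π_apply, h0, map_zero, zero_add] at hi
        exact hi
      rw [hker] at hmem
      exact hmem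
    · rintro ⟨h0, hsnd⟩ o
      have hmem : ∀ i, (r i).π x.snd = 0 := by
        rw [← hker] at hsnd; exact hsnd
      cases o with
      | none =>
        show (myCharRep (A := A)).π x = 0
        rw [myCharRep_π_apply, h0, map_zero]
        rfl
      | some i =>
        show (myExtRep (r i)).π x = 0
        rw [myExtRep_π_apply, h0, map_zero, zero_add]
        exact hmem i
  · intro o
    cases o with
    | none =>
      intro hrank
      have hrank' : 2 ≤ Module.rank ℂ (ULift.{u} ℂ) := hrank
      rw [rank_ulift, Module.rank_self, Cardinal.lift_one] at hrank'
      norm_num at hrank'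
    | some i =>
      intro hrank
      have hrank' : 2 ≤ Module.rank ℂ (r i).X := hrank
      obtain ⟨q, hq2, hqπ⟩ := hsq i hrank'
      refine ⟨(q : Unitization ℂ A), ?_, ?_⟩
      · rw [← Unitization.inr_mul, hq2, Unitization.inr_zero]
      · intro h
        have h' : (myExtRep (r i)).π (q : Unitization ℂ A) = 0 := h
        rw [myExtRep_π_apply, Unitization.fst_inr, map_zero, zero_add,
          Unitization.snd_inr] at h'
        exact hqπ h'
end

section
/- Let π be a continuous irreducible representation of a complex Banach algebra A on a Banach space X with dim X ≥ 2, and suppose there exist a, b ∈ A with ab = 0, π(a) ≠ 0, π(b) ≠ 0. Then there exists q ∈ A with q² = 0 and π(q) ≠ 0. -/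
/-- Let `π` be a continuous irreducible representation of a complex Banach
algebra `A` on a Banach space `X` with `dim X ≥ 2`, and suppose there are `a, b ∈ A` with
`ab = 0`, `π(a) ≠ 0`, `π(b) ≠ 0`.  Then there is `q ∈ A` with `q² = 0` and `π(q) ≠ 0`. -/
theorem square_zero_element_of_orthogonal_pair
    {A : Type*} [NonUnitalNormedRing A] [NormedSpace ℂ A]
    [IsScalarTower ℂ A A] [SMulCommClass ℂ A A] [CompleteSpace A]
    {X : Type*} [NormedAddCommGroup X] [NormedSpace ℂ X] [CompleteSpace X]
    (π : A →ₙₐ[ℂ] (X →L[ℂ] X)) (hπc : Continuous π)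
    (hirr : ∀ ξ : X, ξ ≠ 0 → ∀ η : X, ∃ a : A, π a ξ = η)
    (hdim : 2 ≤ Module.rank ℂ X)
    (a b : A) (hab : a * b = 0) (ha : π a ≠ 0) (hb : π b ≠ 0) :
    ∃ q : A, q * q = 0 ∧ π q ≠ 0 := by
  obtain ⟨ξ, hξ⟩ : ∃ ξ, π a ξ ≠ 0 := by
    by_contra h; push_neg at h; exact ha (ContinuousLinearMap.ext h)
  obtain ⟨η, hη⟩ : ∃ η, π b η ≠ 0 := by
    by_contra h; push_neg at h; exact hb (ContinuousLinearMap.ext h)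
  obtain ⟨c, hc⟩ := hirr (π a ξ) hξ η
  refine ⟨b * c * a, ?_, ?_⟩
  · have : b * c * a * (b * c * a) = b * c * (a * b) * (c * a) := by simp only [mul_assoc]
    rw [this, hab, mul_zero, zero_mul]
  · intro h
    have : π (b * c * a) ξ = π b η := by
      simp [map_mul, hc]
    rw [h] at this
    exact hη (by simpa using this.symm)
end

section
/- Let A be a unital complex Banach algebra, π a continuous irreducible representation of A on a (necessarily) Banach space X. If ξ₁, …, ξ_n ∈ X are linearly independent and η₁, …, η_n ∈ X are linearly independent, then there exists an invertible a ∈ A with π(a)ξ_i = η_i for i = 1, …, n (Sinclair's density theorem with invertible element). -/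
open Function Submodule Nat

section SinclairAux
set_option linter.unusedSectionVars false

variable {A : Type*} [NormedRing A] [NormedAlgebra ℂ A] [CompleteSpace A]
  {X : Type*} [NormedAddCommGroup X] [NormedSpace ℂ X] [CompleteSpace X]

/-- Schur-type lemma: a nonzero continuous linear operator commuting with an irreducible
representation is invertible. -/
theorem sinclair_schur (π : A →ₐ[ℂ] (X →L[ℂ] X))
    (hirr : ∀ ξ : X, ξ ≠ 0 → ∀ η : X, ∃ a : A, π a ξ = η)
    (S : X →L[ℂ] X) (hcomm : ∀ (a : A) (x : X), S (π a x) = π a (S x)) (hS : S ≠ 0) :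
    IsUnit S := by
  have hinj : Function.Injective S := by
    intro x y hxy
    by_contra hne
    have hz : x - y ≠ 0 := sub_ne_zero.mpr hne
    have hSz : S (x - y) = 0 := by rw [map_sub, hxy, sub_self]
    apply hS
    ext w
    obtain ⟨a, ha⟩ := hirr (x - y) hz w
    rw [ContinuousLinearMap.zero_apply, ← ha, hcomm, hSz, map_zero]
  have hsurj : Function.Surjective S := by
    obtain ⟨x, hx⟩ : ∃ x, S x ≠ 0 := by
      by_contra h
      push_neg at h
      exact hS (ContinuousLinearMap.ext fun w => by simp [h w])
    intro y
    obtain ⟨a, ha⟩ := hirr (S x) hx y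
    exact ⟨π a x, by rw [hcomm, ha]⟩
  let e := ContinuousLinearEquiv.ofBijective S (LinearMap.ker_eq_bot.mpr hinj)
    (LinearMap.range_eq_top.mpr hsurj)
  have hE : ∀ y, e y = S y := fun y =>
    congrFun (ContinuousLinearEquiv.coeFn_ofBijective S _ _) y
  refine ⟨⟨S, (e.symm : X →L[ℂ] X), ?_, ?_⟩, rfl⟩
  · ext x
    calc S ((e.symm : X →L[ℂ] X) x) = e (e.symm x) := (hE _).symm
      _ = x := e.apply_symm_apply x
  · ext x
    calc (e.symm : X →L[ℂ] X) (S x) = e.symm (e x) := by rw [hE]; rfl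
      _ = x := e.symm_apply_apply x

/-- If `T (T x) = 0` then `exp T x = x + T x`. -/
theorem sinclair_exp_apply_sq_zero (T : X →L[ℂ] X) (x : X) (h : T (T x) = 0) :
    NormedSpace.exp T x = x + T x := by
  have hTn : ∀ k : ℕ, (T ^ (k + 2)) x = 0 := by
    intro k
    have h2 : (T ^ 2) x = 0 := by
      rw [sq, ContinuousLinearMap.mul_apply, h]
    rw [pow_add, ContinuousLinearMap.mul_apply, h2, map_zero]
  have hs : HasSum (fun k : ℕ => (k !⁻¹ : ℂ) • (T ^ k) x) (NormedSpace.exp T x) := by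
    have h1 := (NormedSpace.exp_series_hasSum_exp' (𝕂 := ℂ) T).mapL
      (ContinuousLinearMap.apply ℂ X x)
    simpa using h1
  have hfin : HasSum (fun k : ℕ => (k !⁻¹ : ℂ) • (T ^ k) x) (x + T x) := by
    have heq : x + T x = ∑ k ∈ ({0, 1} : Finset ℕ), (k !⁻¹ : ℂ) • (T ^ k) x := by
      rw [Finset.sum_pair (by norm_num : (0 : ℕ) ≠ 1)]
      simp
    rw [heq]
    apply hasSum_sum_of_ne_finset_zero
    intro k hk
    have hk2 : 2 ≤ k := by
      simp only [Finset.mem_insert, Finset.mem_singleton] at hk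
      omega
    obtain ⟨m, rfl⟩ := Nat.exists_eq_add_of_le hk2
    rw [add_comm 2 m, hTn m, smul_zero]
  exact hs.unique hfin

/-- If `T x = c • x` then `exp T x = exp c • x`. -/
theorem sinclair_exp_apply_eigen (T : X →L[ℂ] X) (x : X) (c : ℂ) (h : T x = c • x) :
    NormedSpace.exp T x = Complex.exp c • x := by
  have hTn : ∀ k : ℕ, (T ^ k) x = c ^ k • x := by
    intro k
    induction k with
    | zero => simp
    | succ k ih =>
      rw [pow_succ, ContinuousLinearMap.mul_apply, h, map_smul, ih, smul_smul, pow_succ]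
      ring_nf
  have hs : HasSum (fun k : ℕ => (k !⁻¹ : ℂ) • (T ^ k) x) (NormedSpace.exp T x) := by
    have h1 := (NormedSpace.exp_series_hasSum_exp' (𝕂 := ℂ) T).mapL
      (ContinuousLinearMap.apply ℂ X x)
    simpa using h1
  have hs2 : HasSum (fun k : ℕ => (k !⁻¹ : ℂ) • (T ^ k) x)
      (NormedSpace.exp c • x) := by
    have h1 := (NormedSpace.exp_series_hasSum_exp' (𝕂 := ℂ) c).mapL
      (ContinuousLinearMap.toSpanSingleton ℂ x)
    simp only [ContinuousLinearMap.toSpanSingleton_apply] at h1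
    convert h1 using 2 with k
    rw [hTn k, smul_smul, smul_eq_mul]
  rw [hs.unique hs2, ← Complex.exp_eq_exp_ℂ]


/-- Jacobson density: `n`-fold transitivity. -/
theorem sinclair_density_aux (π : A →ₐ[ℂ] (X →L[ℂ] X)) (hπc : Continuous π)
    (hirr : ∀ ξ : X, ξ ≠ 0 → ∀ η : X, ∃ a : A, π a ξ = η) :
    ∀ (n : ℕ) (ξ : Fin n → X), LinearIndependent ℂ ξ →
      ∀ η : Fin n → X, ∃ a : A, ∀ i, π a (ξ i) = η i := by
  intro n
  induction n with
  | zero => exact fun ξ _ η => ⟨1, fun i => i.elim0⟩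
  | succ n IH =>
    intro ξ hξ η
    classical
    set ξ' : Fin n → X := ξ ∘ Fin.castSucc with hξ'def
    have hξ'li : LinearIndependent ℂ ξ' := hξ.comp _ (Fin.castSucc_injective n)
    set z : X := ξ (Fin.last n) with hzdef
    by_cases hN : ∃ b : A, (∀ i : Fin n, π b (ξ' i) = 0) ∧ π b z ≠ 0
    · obtain ⟨b, hb0, hbz⟩ := hN
      obtain ⟨a₀, ha₀⟩ := IH ξ' hξ'li (fun i => η (Fin.castSucc i))
      obtain ⟨c, hc⟩ := hirr _ hbz (η (Fin.last n) - π a₀ z)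
      refine ⟨a₀ + c * b, fun i => ?_⟩
      have hsplit : ∀ w : X, π (a₀ + c * b) w = π a₀ w + π c (π b w) := by
        intro w
        rw [map_add, map_mul, ContinuousLinearMap.add_apply, ContinuousLinearMap.mul_apply]
      refine Fin.lastCases ?_ (fun j => ?_) i
      · have h1 : π (a₀ + c * b) (ξ (Fin.last n)) = π a₀ z + π c (π b z) := hsplit z
        rw [h1, hc]
        abel
      · have h1 : π (a₀ + c * b) (ξ j.castSucc) = π a₀ (ξ' j) + π c (π b (ξ' j)) := hsplit (ξ' j)
        rw [h1, hb0 j, map_zero, add_zero]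
        exact ha₀ j
    · exfalso
      push_neg at hN
      have hz0 : z ≠ 0 := hξ.ne_zero (Fin.last n)
      haveI : Nontrivial X := ⟨z, 0, hz0⟩
      haveI : Nontrivial (X →L[ℂ] X) :=
        ⟨1, 0, fun h => hz0 (by simpa using ContinuousLinearMap.ext_iff.mp h z)⟩
      -- the continuous linear map `a ↦ (π a ξ'ᵢ)ᵢ`
      let Pc : A →L[ℂ] (X →L[ℂ] X) := ⟨π.toLinearMap, hπc⟩
      let Ψ : A →L[ℂ] (Fin n → X) :=
        ContinuousLinearMap.pi fun i => (ContinuousLinearMap.apply ℂ X (ξ' i)).comp Pc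
      have hΨ : ∀ (a : A) (i : Fin n), Ψ a i = π a (ξ' i) := fun a i => rfl
      have hΨsurj : Function.Surjective Ψ := by
        intro y
        obtain ⟨a, ha⟩ := IH ξ' hξ'li y
        exact ⟨a, funext fun i => (hΨ a i).trans (ha i)⟩
      obtain ⟨C, hCpos, hC⟩ := Ψ.exists_preimage_norm_le hΨsurj
      have hwd : ∀ a b : A, Ψ a = Ψ b → π a z = π b z := by
        intro a b hab
        have h0 : ∀ i, π (a - b) (ξ' i) = 0 := by
          intro i
          have hi : π a (ξ' i) = π b (ξ' i) := by
            rw [← hΨ, ← hΨ, hab]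
          rw [map_sub, ContinuousLinearMap.sub_apply, hi, sub_self]
        have := hN (a - b) h0
        rw [map_sub, ContinuousLinearMap.sub_apply] at this
        exact sub_eq_zero.mp this
      choose g hg1 hg2 using hC
      -- the linear functional
      let φ₀ : (Fin n → X) →ₗ[ℂ] X :=
        { toFun := fun y => π (g y) z
          map_add' := fun y w => by
            show π (g (y + w)) z = π (g y) z + π (g w) z
            have h1 : Ψ (g (y + w)) = Ψ (g y + g w) := by
              rw [map_add, hg1, hg1, hg1]
            rw [hwd _ _ h1, map_add, ContinuousLinearMap.add_apply]
          map_smul' := fun c y => by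
            show π (g (c • y)) z = c • π (g y) z
            have h1 : Ψ (g (c • y)) = Ψ (c • g y) := by
              rw [map_smul, hg1, hg1]
            rw [hwd _ _ h1, map_smul]
            simp }
      have hφ₀bound : ∀ y, ‖φ₀ y‖ ≤ (C * ‖Pc‖ * ‖z‖) * ‖y‖ := by
        intro y
        have h1 : ‖π (g y) z‖ ≤ ‖π (g y)‖ * ‖z‖ := (π (g y)).le_opNorm z
        have h2 : ‖π (g y)‖ ≤ ‖Pc‖ * ‖g y‖ := Pc.le_opNorm (g y)
        have h3 : ‖g y‖ ≤ C * ‖y‖ := hg2 y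
        have hz : (0:ℝ) ≤ ‖z‖ := norm_nonneg _
        have hPn : (0:ℝ) ≤ ‖Pc‖ := ContinuousLinearMap.opNorm_nonneg Pc
        calc ‖φ₀ y‖ = ‖π (g y) z‖ := rfl
          _ ≤ ‖π (g y)‖ * ‖z‖ := h1
          _ ≤ (‖Pc‖ * ‖g y‖) * ‖z‖ := by
              exact mul_le_mul_of_nonneg_right h2 hz
          _ ≤ (‖Pc‖ * (C * ‖y‖)) * ‖z‖ := by
              have := mul_le_mul_of_nonneg_left h3 hPn
              exact mul_le_mul_of_nonneg_right this hz
          _ = (C * ‖Pc‖ * ‖z‖) * ‖y‖ := by ring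
      let F : (Fin n → X) →L[ℂ] X := LinearMap.mkContinuous φ₀ (C * ‖Pc‖ * ‖z‖) hφ₀bound
      have hφapp : ∀ y, F y = π (g y) z := fun y => rfl
      have hφ : ∀ a : A, F (Ψ a) = π a z := fun a => hwd (g (Ψ a)) a (hg1 _)
      -- single coordinate inclusions
      have hsingle_cont : ∀ i : Fin n, Continuous fun x : X => (Pi.single i x : Fin n → X) := by
        intro i
        apply continuous_pi
        intro j
        rcases eq_or_ne j i with rfl | hji
        · simpa [Pi.single_eq_same] using continuous_id'
        · simpa [Pi.single_eq_of_ne hji] using continuous_const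
      let T : Fin n → (X →L[ℂ] X) := fun i =>
        F.comp ⟨LinearMap.single ℂ (fun _ : Fin n => X) i, hsingle_cont i⟩
      have hTapp : ∀ (i : Fin n) (x : X), T i x = F (Pi.single i x) := fun i x => rfl
      have hsingle : ∀ (c : A) (i : Fin n) (x : X),
          Ψ (c * g (Pi.single i x)) = Pi.single i (π c x) := by
        intro c i x
        funext j
        have h1 : Ψ (g (Pi.single i x)) j = (Pi.single i x : Fin n → X) j := by rw [hg1]
        rw [hΨ] at h1
        rw [hΨ, map_mul, ContinuousLinearMap.mul_apply, h1]
        rcases eq_or_ne j i with rfl | hji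
        · rw [Pi.single_eq_same, Pi.single_eq_same]
        · rw [Pi.single_eq_of_ne hji, Pi.single_eq_of_ne hji, map_zero]
      have hTcomm : ∀ (i : Fin n) (c : A) (x : X), T i (π c x) = π c (T i x) := by
        intro i c x
        rw [hTapp, hTapp, ← hsingle c i x, hφ, map_mul, ContinuousLinearMap.mul_apply,
          hφapp]
      -- each T i is a scalar
      have hTscal : ∀ i : Fin n, ∃ lam : ℂ, ∀ x : X, T i x = lam • x := by
        intro i
        obtain ⟨lam, hlam⟩ := spectrum.nonempty (T i)
        rw [spectrum.mem_iff] at hlam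
        refine ⟨lam, fun x => ?_⟩
        by_contra hne
        apply hlam
        apply sinclair_schur π hirr
        · intro a y
          simp only [ContinuousLinearMap.sub_apply, map_sub]
          rw [hTcomm i a y]
          congr 1
          rw [Algebra.algebraMap_eq_smul_one]
          simp
        · intro h0
          apply hne
          have := ContinuousLinearMap.ext_iff.mp h0 x
          simp only [ContinuousLinearMap.sub_apply, ContinuousLinearMap.zero_apply,
            Algebra.algebraMap_eq_smul_one, ContinuousLinearMap.smul_apply,
            ContinuousLinearMap.one_apply] at this
          rw [sub_eq_zero] at this
          exact this.symm
      choose lam hlam using hTscal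
      -- derive the contradiction
      have hΨone : Ψ 1 = fun i => ξ' i := funext fun i => by rw [hΨ, map_one]; rfl
      have h1 : F (fun i => ξ' i) = z := by rw [← hΨone, hφ, map_one]; rfl
      have h2 : (fun i => ξ' i) = ∑ i : Fin n, Pi.single i (ξ' i) := by
        funext j
        rw [Finset.sum_apply]
        simp [Pi.single_apply]
      have h3 : z = ∑ i : Fin n, lam i • ξ' i := by
        rw [← h1, h2, map_sum]
        congr 1
        funext i
        rw [← hTapp, hlam]
      have hg : ∀ gg : Fin (n+1) → ℂ, (∑ i, gg i • ξ i) = 0 → ∀ i, gg i = 0 :=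
        Fintype.linearIndependent_iff.mp hξ
      have hzero : (∑ i : Fin (n+1), (Fin.snoc (fun i => lam i) (-1) : Fin (n+1) → ℂ) i • ξ i) = 0 := by
        rw [Fin.sum_univ_castSucc]
        simp only [Fin.snoc_castSucc, Fin.snoc_last]
        have h4 : (∑ i : Fin n, lam i • ξ (Fin.castSucc i)) = z := h3.symm
        rw [h4, ← hzdef]
        simp
      have := hg _ hzero (Fin.last n)
      rw [Fin.snoc_last] at this
      norm_num at this


/-- Exponential move: if `π b` squares to zero on a family, `exp b` implements `1 + π b`. -/
theorem sinclair_expMove (π : A →ₐ[ℂ] (X →L[ℂ] X)) (hπc : Continuous π)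
    {n : ℕ} (ξ : Fin n → X) (b : A) (h2 : ∀ i, π b (π b (ξ i)) = 0) :
    ∃ u : Aˣ, ∀ i, π (↑u) (ξ i) = ξ i + π b (ξ i) := by
  letI : NormedAlgebra ℚ A := .restrictScalars ℚ ℂ A
  letI : NormedAlgebra ℚ (X →L[ℂ] X) := .restrictScalars ℚ ℂ (X →L[ℂ] X)
  refine ⟨(NormedSpace.isUnit_exp b).unit, fun i => ?_⟩
  rw [IsUnit.unit_spec, NormedSpace.map_exp π hπc b]
  exact sinclair_exp_apply_sq_zero _ _ (h2 i)

/-- Dilation move. -/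
theorem sinclair_dilMove (π : A →ₐ[ℂ] (X →L[ℂ] X)) (hπc : Continuous π)
    {n : ℕ} (ξ : Fin n → X) (j : Fin n) (c : ℂ) (b : A)
    (hj : π b (ξ j) = c • ξ j) (h0 : ∀ i, i ≠ j → π b (ξ i) = 0) :
    ∃ u : Aˣ, π (↑u) (ξ j) = Complex.exp c • ξ j ∧ ∀ i, i ≠ j → π (↑u) (ξ i) = ξ i := by
  letI : NormedAlgebra ℚ A := .restrictScalars ℚ ℂ A
  letI : NormedAlgebra ℚ (X →L[ℂ] X) := .restrictScalars ℚ ℂ (X →L[ℂ] X)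
  refine ⟨(NormedSpace.isUnit_exp b).unit, ?_, fun i hij => ?_⟩
  · rw [IsUnit.unit_spec, NormedSpace.map_exp π hπc b]
    exact sinclair_exp_apply_eigen _ _ _ hj
  · rw [IsUnit.unit_spec, NormedSpace.map_exp π hπc b]
    have h : π b (ξ i) = (0 : ℂ) • ξ i := by rw [h0 i hij, zero_smul]
    rw [sinclair_exp_apply_eigen _ _ _ h, Complex.exp_zero, one_smul]

/-- One-coordinate move: replace `ξ j` by any `w` keeping linear independence,
via an invertible element. -/
theorem sinclair_updateMove (π : A →ₐ[ℂ] (X →L[ℂ] X)) (hπc : Continuous π)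
    (hirr : ∀ ξ : X, ξ ≠ 0 → ∀ η : X, ∃ a : A, π a ξ = η)
    {n : ℕ} (ξ : Fin n → X) (hξ : LinearIndependent ℂ ξ)
    (j : Fin n) (w : X) (hw : LinearIndependent ℂ (Function.update ξ j w)) :
    ∃ u : Aˣ, ∀ i, π (↑u) (ξ i) = Function.update ξ j w i := by
  classical
  set v : X := w - ξ j with hv
  by_cases hmem : v ∈ Submodule.span ℂ (Set.range ξ)
  · -- `v` in the span: dilation + transvection
    rw [mem_span_range_iff_exists_fun] at hmem
    obtain ⟨c, hc⟩ := hmem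
    set v' : X := ∑ i ∈ Finset.univ.erase j, c i • ξ i with hv'
    have hvsplit : v = v' + c j • ξ j := by
      rw [hv', ← hc, ← Finset.sum_erase_add Finset.univ _ (Finset.mem_univ j)]
    have hμ : (1 : ℂ) + c j ≠ 0 := by
      intro h0
      have hwv' : w = v' := by
        calc w = ξ j + v := by rw [hv]; abel
          _ = v' + ((1 : ℂ) + c j) • ξ j := by rw [hvsplit, add_smul, one_smul]; abel
          _ = v' := by rw [h0, zero_smul, add_zero]
      have hli := Fintype.linearIndependent_iff.mp hw
      have hsum : (∑ i, (if i = j then (1:ℂ) else -(c i)) • Function.update ξ j w i) = 0 := by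
        rw [← Finset.sum_erase_add Finset.univ _ (Finset.mem_univ j)]
        rw [if_pos rfl, one_smul, Function.update_self]
        have hterm : ∀ i ∈ Finset.univ.erase j,
            (if i = j then (1:ℂ) else -(c i)) • Function.update ξ j w i = -(c i • ξ i) := by
          intro i hi
          have hij : i ≠ j := Finset.ne_of_mem_erase hi
          rw [if_neg hij, Function.update_of_ne hij, neg_smul]
        rw [Finset.sum_congr rfl hterm, Finset.sum_neg_distrib, ← hv', hwv']
        abel
      have h1 := hli _ hsum j
      rw [if_pos rfl] at h1
      exact one_ne_zero h1
    -- dilation by `1 + c j` at coordinate `j`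
    obtain ⟨b₁, hb₁⟩ := sinclair_density_aux π hπc hirr n ξ hξ
      (fun i => if i = j then Complex.log (1 + c j) • ξ j else 0)
    obtain ⟨u₁, hu₁j, hu₁⟩ := sinclair_dilMove π hπc ξ j (Complex.log (1 + c j)) b₁
      (by simpa using hb₁ j) (fun i hij => by simpa [hij] using hb₁ i)
    rw [Complex.exp_log hμ] at hu₁j
    set ζ : Fin n → X := fun i => π (↑u₁) (ξ i) with hζ
    have hζj : ζ j = ((1 : ℂ) + c j) • ξ j := hu₁j
    have hζi : ∀ i, i ≠ j → ζ i = ξ i := hu₁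
    have hζli : LinearIndependent ℂ ζ := by
      have hinj : Function.Injective (π (↑u₁ : A)) := by
        intro x y hxy
        have h1 : π ((↑(u₁⁻¹) : A) * (↑u₁ : A)) x = π ((↑(u₁⁻¹) : A) * (↑u₁ : A)) y := by
          rw [map_mul, ContinuousLinearMap.mul_apply, ContinuousLinearMap.mul_apply, hxy]
        rwa [Units.inv_mul, map_one, ContinuousLinearMap.one_apply,
          ContinuousLinearMap.one_apply] at h1
      exact hξ.map' (π (↑u₁ : A)).toLinearMap
        (LinearMap.ker_eq_bot.mpr (by exact hinj))
    -- transvection adding `v'` to coordinate `j`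
    obtain ⟨b₂, hb₂⟩ := sinclair_density_aux π hπc hirr n ζ hζli
      (fun i => if i = j then v' else 0)
    have hb₂j : π b₂ (ζ j) = v' := by simpa using hb₂ j
    have hb₂i : ∀ i, i ≠ j → π b₂ (ζ i) = 0 := fun i hij => by simpa [hij] using hb₂ i
    have h2 : ∀ i, π b₂ (π b₂ (ζ i)) = 0 := by
      intro i
      by_cases hij : i = j
      · rw [hij, hb₂j, hv', map_sum]
        apply Finset.sum_eq_zero
        intro k hk
        have hkj : k ≠ j := Finset.ne_of_mem_erase hk
        rw [map_smul, ← hζi k hkj, hb₂i k hkj, smul_zero]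
      · rw [hb₂i i hij, map_zero]
    obtain ⟨u₂, hu₂⟩ := sinclair_expMove π hπc ζ b₂ h2
    refine ⟨u₂ * u₁, fun i => ?_⟩
    have hcomp : π (↑(u₂ * u₁)) (ξ i) = π (↑u₂) (ζ i) := by
      rw [Units.val_mul, map_mul, ContinuousLinearMap.mul_apply]
    rw [hcomp, hu₂ i]
    by_cases hij : i = j
    · rw [hij, Function.update_self, hb₂j, hζj, add_smul, one_smul]
      have hw' : w = ξ j + v := by rw [hv]; abel
      rw [hw', hvsplit]
      abel
    · rw [Function.update_of_ne hij, hb₂i i hij, hζi i hij, add_zero]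
  · -- `v` not in the span: single transvection
    have hv0 : LinearIndependent ℂ (Fin.snoc ξ v : Fin (n+1) → X) :=
      linearIndependent_fin_snoc.mpr ⟨hξ, hmem⟩
    obtain ⟨b, hb⟩ := sinclair_density_aux π hπc hirr (n+1) (Fin.snoc ξ v) hv0
      (Fin.snoc (fun i => if i = j then v else 0) 0)
    have hbξ : ∀ i, π b (ξ i) = if i = j then v else 0 := by
      intro i
      have := hb (Fin.castSucc i)
      rwa [Fin.snoc_castSucc, Fin.snoc_castSucc] at this
    have hbv : π b v = 0 := by
      have := hb (Fin.last n)
      rwa [Fin.snoc_last, Fin.snoc_last] at this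
    have h2 : ∀ i, π b (π b (ξ i)) = 0 := by
      intro i
      rw [hbξ i]
      split_ifs with h
      · exact hbv
      · exact map_zero _
    obtain ⟨u, hu⟩ := sinclair_expMove π hπc ξ b h2
    refine ⟨u, fun i => ?_⟩
    rw [hu i, hbξ i]
    rcases eq_or_ne i j with rfl | hij
    · rw [if_pos rfl, Function.update_self, hv]
      abel
    · rw [if_neg hij, Function.update_of_ne hij, add_zero]


theorem sinclair_main (π : A →ₐ[ℂ] (X →L[ℂ] X)) (hπc : Continuous π)
    (hirr : ∀ ξ : X, ξ ≠ 0 → ∀ η : X, ∃ a : A, π a ξ = η) :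
    ∀ (n : ℕ) (ξ η : Fin n → X), LinearIndependent ℂ ξ → LinearIndependent ℂ η →
      ∃ u : Aˣ, ∀ i, π (↑u) (ξ i) = η i := by
  intro n
  induction n with
  | zero => exact fun ξ η _ _ => ⟨1, fun i => i.elim0⟩
  | succ n IH =>
    intro ξ η hξ hη
    classical
    obtain ⟨u₀, hu₀⟩ := IH (ξ ∘ Fin.castSucc) (η ∘ Fin.castSucc)
      (hξ.comp _ (Fin.castSucc_injective n)) (hη.comp _ (Fin.castSucc_injective n))
    set ζ : Fin (n+1) → X := fun i => π (↑u₀) (ξ i) with hζ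
    have hinj : Function.Injective (π (↑u₀ : A)) := by
      intro x y hxy
      have h1 : π ((↑(u₀⁻¹) : A) * (↑u₀ : A)) x = π ((↑(u₀⁻¹) : A) * (↑u₀ : A)) y := by
        rw [map_mul, ContinuousLinearMap.mul_apply, ContinuousLinearMap.mul_apply, hxy]
      rwa [Units.inv_mul, map_one, ContinuousLinearMap.one_apply,
        ContinuousLinearMap.one_apply] at h1
    have hζli : LinearIndependent ℂ ζ :=
      hξ.map' (π (↑u₀ : A)).toLinearMap (LinearMap.ker_eq_bot.mpr (by exact hinj))
    have hζc : ∀ i : Fin n, ζ (Fin.castSucc i) = η (Fin.castSucc i) := fun i => hu₀ i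
    have hupd : Function.update ζ (Fin.last n) (η (Fin.last n)) = η := by
      funext i
      rcases eq_or_ne i (Fin.last n) with rfl | hi
      · rw [Function.update_self]
      · rw [Function.update_of_ne hi]
        obtain ⟨j, rfl⟩ := Fin.exists_castSucc_eq.mpr hi
        exact hζc j
    have hupdli : LinearIndependent ℂ (Function.update ζ (Fin.last n) (η (Fin.last n))) := by
      rw [hupd]; exact hη
    obtain ⟨u₁, hu₁⟩ := sinclair_updateMove π hπc hirr ζ hζli (Fin.last n)
      (η (Fin.last n)) hupdli
    refine ⟨u₁ * u₀, fun i => ?_⟩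
    have hcomp : π (↑(u₁ * u₀)) (ξ i) = π (↑u₁) (ζ i) := by
      rw [Units.val_mul, map_mul, ContinuousLinearMap.mul_apply]
    rw [hcomp, hu₁ i, hupd]

end SinclairAux

/-- **Sinclair's density theorem.** Let `π` be a continuous irreducible
representation of a unital complex Banach algebra `A` on a Banach space `X`.  If
`ξ₁, …, ξₙ ∈ X` are linearly independent and `η₁, …, ηₙ ∈ X` are linearly independent,
then there exists an invertible `a ∈ A` with `π(a)ξᵢ = ηᵢ` for all `i`. -/
theorem sinclair_density
    {A : Type*} [NormedRing A] [NormedAlgebra ℂ A] [CompleteSpace A]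
    {X : Type*} [NormedAddCommGroup X] [NormedSpace ℂ X] [CompleteSpace X]
    (π : A →ₐ[ℂ] (X →L[ℂ] X)) (hπc : Continuous π)
    (hirr : ∀ ξ : X, ξ ≠ 0 → ∀ η : X, ∃ a : A, π a ξ = η)
    {n : ℕ} (ξ η : Fin n → X)
    (hξ : LinearIndependent ℂ ξ) (hη : LinearIndependent ℂ η) :
    ∃ a : Aˣ, ∀ i, π (↑a) (ξ i) = η i := by
  exact sinclair_main π hπc hirr n ξ η hξ hη
end
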